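/- If G is a connected graph with maximum degree at most 4 and at least 7 vertices, then mdim(G) ≤ |V(G)| − 1. -/

import Mathlib

open SimpleGraph

variable {V : Type*}

/-- Distance from a vertex `w` to an (unordered) edge `e`:
the minimum of the distances to the two endpoints. -/
noncomputable def edgeVertexDist (G : SimpleGraph V) (w : V) (e : Sym2 V) : ℕ :=
  Sym2.lift ⟨fun a b => min (G.dist a w) (G.dist b w), fun a b => by simp [min_comm]⟩ e

/-- Distance from a vertex `w` to a mixed element (vertex or edge). -/
noncomputable def mixedDist (G : SimpleGraph V) (w : V) : V ⊕ G.edgeSet → ℕ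
  | Sum.inl v => G.dist v w
  | Sum.inr e => edgeVertexDist G w e.val

/-- `W` is a mixed resolving set: every two distinct mixed elements are
distinguished by the distance to some vertex of `W`. -/
def IsMixedResolving (G : SimpleGraph V) (W : Set V) : Prop :=
  ∀ x y : V ⊕ G.edgeSet, x ≠ y → ∃ w ∈ W, mixedDist G w x ≠ mixedDist G w y

/-- The mixed metric dimension of a finite graph. -/
noncomputable def mdim [Fintype V] (G : SimpleGraph V) : ℕ :=
  sInf {n | ∃ W : Finset V, W.card = n ∧ IsMixedResolving G ↑W}

/-- `y` is a maximal neighbor of `x`: `y` is a neighbor of `x` adjacent to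
every neighbor of `x` other than `y` itself. -/
def IsMaxNeighbor (G : SimpleGraph V) (x y : V) : Prop :=
  G.Adj x y ∧ ∀ z, G.Adj x z → z ≠ y → G.Adj y z


namespace MdimAux

lemma edgeVertexDist_mk (G : SimpleGraph V) (w a b : V) :
    edgeVertexDist G w s(a, b) = min (G.dist a w) (G.dist b w) := rfl

section

variable {G : SimpleGraph V} (hG : G.Connected)

include hG

lemma dist_pos' {a b : V} (h : a ≠ b) : 0 < G.dist a b :=
  Nat.pos_of_ne_zero (fun h0 => h (hG.dist_eq_zero_iff.mp h0))

lemma resolve_vertex_vertex {v v' : V} (h : v ≠ v') (u : V) :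
    ∃ w, w ≠ u ∧ G.dist v w ≠ G.dist v' w := by
  rcases eq_or_ne v u with rfl | hvu
  · refine ⟨v', h.symm, ?_⟩
    have h1 : G.dist v' v' = 0 := hG.dist_eq_zero_iff.mpr rfl
    have h2 : 0 < G.dist v v' := dist_pos' hG h
    omega
  · refine ⟨v, hvu, ?_⟩
    have h1 : G.dist v v = 0 := hG.dist_eq_zero_iff.mpr rfl
    have h2 : 0 < G.dist v' v := dist_pos' hG (Ne.symm h)
    omega

/-- witness distinguishing an edge (given by endpoints) from a vertex not in it,
where the witness is an endpoint. -/
lemma resolve_edge_out {a b v : V} (hab : G.Adj a b) (hv : v ≠ a)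
    (hva : a ≠ v) : min (G.dist a a) (G.dist b a) ≠ G.dist v a := by
  have h1 : G.dist a a = 0 := hG.dist_eq_zero_iff.mpr rfl
  have h2 : 0 < G.dist v a := dist_pos' hG hv
  omega

end


lemma evd_eq_zero_of_mem {G : SimpleGraph V} (hG : G.Connected) {x : V} {e : Sym2 V}
    (hx : x ∈ e) : edgeVertexDist G x e = 0 := by
  induction e with
  | h a b =>
    rw [Sym2.mem_iff] at hx
    rw [edgeVertexDist_mk]
    rcases hx with rfl | rfl
    · simp [hG.dist_eq_zero_iff.mpr rfl]
    · simp [hG.dist_eq_zero_iff.mpr rfl]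

lemma evd_pos_of_not_mem {G : SimpleGraph V} (hG : G.Connected) {x : V} {e : Sym2 V}
    (hx : x ∉ e) : 0 < edgeVertexDist G x e := by
  induction e with
  | h a b =>
    rw [Sym2.mem_iff, not_or] at hx
    rw [edgeVertexDist_mk]
    exact lt_min (dist_pos' hG (Ne.symm hx.1)) (dist_pos' hG (Ne.symm hx.2))

lemma sym2_witness (u a b c d : V) (hab : a ≠ b) (hcd : c ≠ d)
    (hne : s(a,b) ≠ s(c,d)) :
    ∃ x : V, x ≠ u ∧ ((x ∈ s(a,b) ∧ x ∉ s(c,d)) ∨ (x ∈ s(c,d) ∧ x ∉ s(a,b))) := by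
  simp only [ne_eq, Sym2.eq_iff] at hne
  push_neg at hne
  simp only [Sym2.mem_iff, not_or]
  by_cases hac : a = c
  · subst hac
    have hbd : b ≠ d := hne.1 rfl
    by_cases hbu : b = u
    · exact ⟨d, fun h => hbd (hbu.trans h.symm), Or.inr ⟨Or.inr rfl, hcd.symm, Ne.symm hbd⟩⟩
    · exact ⟨b, hbu, Or.inl ⟨Or.inr rfl, hab.symm, hbd⟩⟩
  · by_cases had : a = d
    · subst had
      have hbc : b ≠ c := hne.2 rfl
      by_cases hbu : b = u
      · exact ⟨c, fun h => hbc (hbu.trans h.symm), Or.inr ⟨Or.inl rfl, Ne.symm hac, Ne.symm hbc⟩⟩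
      · exact ⟨b, hbu, Or.inl ⟨Or.inr rfl, hbc, hab.symm⟩⟩
    · by_cases hau : a = u
      · by_cases hbc : b = c
        · subst hbc
          exact ⟨d, fun h => had (h ▸ hau), Or.inr ⟨Or.inr rfl, Ne.symm had, Ne.symm hcd⟩⟩
        · by_cases hbd : b = d
          · subst hbd
            exact ⟨c, fun h => hac (h ▸ hau), Or.inr ⟨Or.inl rfl, Ne.symm hac, Ne.symm hbc⟩⟩
          · exact ⟨b, fun h => hab (hau.trans h.symm), Or.inl ⟨Or.inr rfl, hbc, hbd⟩⟩
      · exact ⟨a, hau, Or.inl ⟨Or.inl rfl, hac, had⟩⟩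

/-- Main lemma for part 1. -/
lemma resolving_of_no_max_neighbor [DecidableEq V] [Fintype V] (G : SimpleGraph V)
    (hG : G.Connected) (u : V) (hu : ∀ v, ¬ IsMaxNeighbor G u v) :
    IsMixedResolving G ↑(Finset.univ.erase u) := by
  have d0 : ∀ {a b : V}, G.dist a b = 0 ↔ a = b := fun {a b} => hG.dist_eq_zero_iff
  -- vertex vs edge containing it (witness avoiding u handled via hu)
  have vertEdge : ∀ (v : V) (e : G.edgeSet), v ∈ e.val →
      ∃ w, w ≠ u ∧ G.dist v w ≠ edgeVertexDist G w e.val := by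
    rintro v ⟨e, he⟩ hv
    induction e with
    | h a b =>
      simp only at he hv ⊢
      rw [Sym2.mem_iff] at hv
      -- wlog v = a
      have main : ∀ a b : V, G.Adj a b →
          ∃ w, w ≠ u ∧ G.dist a w ≠ min (G.dist a w) (G.dist b w) := by
        intro a b hab
        by_cases hbu : b = u
        · -- e = s(a, u); use non-max-neighbor of u
          have hu' := hu a
          rw [← hbu] at hu'
          simp only [IsMaxNeighbor, not_and, not_forall] at hu'
          obtain ⟨z, hz, hza, hnadj⟩ := hu' hab.symm
          refine ⟨z, by rw [← hbu]; exact (G.ne_of_adj hz).symm, ?_⟩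
          have hd1 : G.dist b z = 1 := dist_eq_one_iff_adj.mpr hz
          have hd2 : 2 ≤ G.dist a z := by
            have hne : a ≠ z := Ne.symm hza
            have h0 : G.dist a z ≠ 0 := fun h => hne (d0.mp h)
            have h1 : G.dist a z ≠ 1 := fun h => hnadj (dist_eq_one_iff_adj.mp h)
            omega
          omega
        · refine ⟨b, hbu, ?_⟩
          have h1 : G.dist b b = 0 := d0.mpr rfl
          have h2 : 0 < G.dist a b := dist_pos' hG (G.ne_of_adj hab)
          omega
      rcases hv with rfl | rfl
      · obtain ⟨w, hw, hne⟩ := main v b he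
        exact ⟨w, hw, by simpa [edgeVertexDist_mk] using hne⟩
      · obtain ⟨w, hw, hne⟩ := main v a (G.adj_symm he)
        refine ⟨w, hw, ?_⟩
        rw [edgeVertexDist_mk, min_comm]
        exact hne
  have vertEdgeFull : ∀ (v : V) (e : G.edgeSet),
      ∃ w, w ≠ u ∧ G.dist v w ≠ edgeVertexDist G w e.val := by
    intro v e
    by_cases hv : v ∈ e.val
    · exact vertEdge v e hv
    · obtain ⟨e, he⟩ := e
      induction e with
      | h a b =>
        simp only [Sym2.mem_iff, not_or] at hv
        obtain ⟨hva, hvb⟩ := hv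
        have hab : a ≠ b := G.ne_of_adj he
        have main : ∀ a b : V, G.Adj a b → v ≠ a → a ≠ u →
            ∃ w, w ≠ u ∧ G.dist v w ≠ min (G.dist a w) (G.dist b w) := by
          intro a b hab' hva' hau
          refine ⟨a, hau, ?_⟩
          have h1 : G.dist a a = 0 := d0.mpr rfl
          have h2 : 0 < G.dist v a := dist_pos' hG hva'
          omega
        by_cases hau : a = u
        · subst hau
          obtain ⟨w, hw, hne⟩ := main b a (G.adj_symm he) hvb (fun h => hab h.symm)
          refine ⟨w, hw, ?_⟩
          rw [show (⟨s(a,b), he⟩ : G.edgeSet).val = s(a,b) from rfl,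
            edgeVertexDist_mk, min_comm]
          exact hne
        · obtain ⟨w, hw, hne⟩ := main a b he hva hau
          refine ⟨w, hw, ?_⟩
          rw [show (⟨s(a,b), he⟩ : G.edgeSet).val = s(a,b) from rfl, edgeVertexDist_mk]
          exact hne
  have key : ∀ x y : V ⊕ G.edgeSet, x ≠ y →
      ∃ w, w ≠ u ∧ mixedDist G w x ≠ mixedDist G w y := by
    rintro (v | e) (v' | e') hxy
    · have hvv : v ≠ v' := fun h => hxy (by rw [h])
      exact resolve_vertex_vertex hG hvv u
    · exact vertEdgeFull v e'
    · obtain ⟨w, hw, hne⟩ := vertEdgeFull v' e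
      exact ⟨w, hw, fun h => hne h.symm⟩
    · -- edge vs edge
      have hee : e.val ≠ e'.val := fun h => hxy (by
        apply congrArg Sum.inr; exact Subtype.ext h)
      obtain ⟨e, he⟩ := e
      obtain ⟨e', he'⟩ := e'
      simp only at hee ⊢
      induction e with
      | h a b =>
        induction e' with
        | h c d =>
          obtain ⟨x, hxu, hx⟩ := sym2_witness u a b c d (G.ne_of_adj he) (G.ne_of_adj he') hee
          refine ⟨x, hxu, ?_⟩
          show edgeVertexDist G x s(a,b) ≠ edgeVertexDist G x s(c,d)
          rcases hx with ⟨hin, hout⟩ | ⟨hin, hout⟩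
          · have h1 := evd_eq_zero_of_mem hG hin
            have h2 := evd_pos_of_not_mem hG hout
            omega
          · have h1 := evd_eq_zero_of_mem hG hin
            have h2 := evd_pos_of_not_mem hG hout
            omega
  intro x y hxy
  obtain ⟨w, hw, hne⟩ := key x y hxy
  exact ⟨w, by simp [hw], hne⟩

/-- if A contains u and is closed under adjacency, it contains everything (connected). -/
lemma closure_lemma [Fintype V] [DecidableEq V] (G : SimpleGraph V)
    (hG : G.Connected) (A : Finset V) (u : V) (hu : u ∈ A)
    (hA : ∀ x ∈ A, ∀ y, G.Adj x y → y ∈ A) :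
    Fintype.card V ≤ A.card := by
  have hwalk : ∀ (a x : V), a ∈ A → G.Walk a x → x ∈ A := by
    intro a x ha p
    induction p with
    | nil => exact ha
    | cons h p ih => exact ih (hA _ ha _ h)
  have : ∀ x : V, x ∈ A := by
    intro x
    obtain ⟨p⟩ := (hG u x)
    exact hwalk u x hu p
  calc Fintype.card V = Finset.univ.card := rfl
    _ ≤ A.card := Finset.card_le_card (fun x _ => this x)

lemma exists_no_max_neighbor [Fintype V] [DecidableEq V] (G : SimpleGraph V)
    [DecidableRel G.Adj] (hG : G.Connected) (hΔ : ∀ v : V, G.degree v ≤ 4)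
    (hn : 7 ≤ Fintype.card V) :
    ∃ u : V, ∀ v : V, ¬ IsMaxNeighbor G u v := by
  by_contra hc
  push_neg at hc
  -- hc : ∀ u, ∃ v, IsMaxNeighbor G u v
  have hne : (Finset.univ : Finset V).Nonempty := by
    have : Nonempty V := Fintype.card_pos_iff.mp (by omega)
    exact Finset.univ_nonempty
  obtain ⟨u, -, hmaxdeg⟩ := Finset.exists_max_image Finset.univ (fun x => G.degree x) hne
  simp only [Finset.mem_univ, forall_true_left, true_implies] at hmaxdeg
  obtain ⟨v, huv, hvmax⟩ := hc u
  have huv_ne : u ≠ v := G.ne_of_adj huv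
  -- F = insert u (N(u) \ {v}) ⊆ N(v), with card = deg u
  set F : Finset V := insert u ((G.neighborFinset u).erase v) with hF
  have hFsub : F ⊆ G.neighborFinset v := by
    intro z hz
    rw [Finset.mem_insert] at hz
    rcases hz with rfl | hz
    · rw [mem_neighborFinset]; exact G.adj_symm huv
    · rw [Finset.mem_erase, mem_neighborFinset] at hz
      rw [mem_neighborFinset]
      exact hvmax z hz.2 hz.1
  have hFcard : F.card = G.degree u := by
    rw [hF, Finset.card_insert_of_notMem (by
      simp [Finset.mem_erase, mem_neighborFinset, G.irrefl]),
      Finset.card_erase_of_mem (by rw [mem_neighborFinset]; exact huv)]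
    have : 0 < G.degree u := by
      rw [← card_neighborFinset_eq_degree]
      exact Finset.card_pos.mpr ⟨v, by rw [mem_neighborFinset]; exact huv⟩
    rw [← card_neighborFinset_eq_degree]
    rw [← card_neighborFinset_eq_degree] at this
    omega
  have hNv : G.neighborFinset v = F := by
    refine (Finset.eq_of_subset_of_card_le hFsub ?_).symm
    rw [hFcard, card_neighborFinset_eq_degree]
    exact hmaxdeg v
  have hvAdj : ∀ z, G.Adj v z ↔ (z = u ∨ (G.Adj u z ∧ z ≠ v)) := by
    intro z
    rw [← mem_neighborFinset, hNv, hF, Finset.mem_insert, Finset.mem_erase,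
      mem_neighborFinset]
    tauto
  by_cases hcase : ∀ w, G.Adj u w → ∀ s, G.Adj w s → (s = u ∨ G.Adj u s)
  · -- graph is contained in closed nbhd of u : card ≤ 5 < 7
    set A : Finset V := insert u (G.neighborFinset u) with hA
    have hclosed : ∀ x ∈ A, ∀ y, G.Adj x y → y ∈ A := by
      intro x hx y hxy
      rw [hA, Finset.mem_insert] at hx ⊢
      rcases hx with rfl | hx
      · exact Or.inr ((mem_neighborFinset _ _ _).mpr hxy)
      · rw [mem_neighborFinset] at hx
        rcases hcase x hx y hxy with rfl | h
        · exact Or.inl rfl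
        · exact Or.inr ((mem_neighborFinset _ _ _).mpr h)
    have hcard : A.card ≤ 5 := by
      calc A.card ≤ (G.neighborFinset u).card + 1 := Finset.card_insert_le _ _
        _ ≤ 5 := by rw [card_neighborFinset_eq_degree]; have := hΔ u; omega
    have := closure_lemma G hG A u (by simp [hA]) hclosed
    omega
  · push_neg at hcase
    obtain ⟨w, huw, s, hws, hsu, hnus⟩ := hcase
    -- basic non-adjacency / distinctness facts
    have hwu : w ≠ u := (G.ne_of_adj huw).symm
    have hwv : w ≠ v := by
      rintro rfl
      rcases (hvAdj s).mp hws with rfl | ⟨h, -⟩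
      · exact hsu rfl
      · exact hnus h
    have hsv : s ≠ v := fun h => hnus (h ▸ huv)
    have hnvs : ¬ G.Adj v s := by
      intro h
      rcases (hvAdj s).mp h with rfl | ⟨h', -⟩
      · exact hsu rfl
      · exact hnus h'
    have hAvw : G.Adj v w := (hvAdj w).mpr (Or.inr ⟨huw, hwv⟩)
    have hsw : s ≠ w := (G.ne_of_adj hws).symm
    -- t := maximal neighbor of w
    obtain ⟨t, hwt, htmax⟩ := hc w
    have htu : t ≠ u := by
      rintro rfl
      exact hnus (htmax s hws hsu)
    have htv : t ≠ v := by
      rintro rfl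
      exact hnvs (htmax s hws hsv)
    have hts : t ≠ s := by
      rintro rfl
      exact hnus (G.adj_symm (htmax u (G.adj_symm huw) (Ne.symm hsu)))
    have htw : t ≠ w := (G.ne_of_adj hwt).symm
    have hAtu : G.Adj t u := htmax u (G.adj_symm huw) (Ne.symm htu)
    have hAtv : G.Adj t v := htmax v (G.adj_symm hAvw) (Ne.symm htv)
    have hAts : G.Adj t s := htmax s hws (Ne.symm hts)
    -- N(w) = {u, v, s, t}
    have hvs : v ≠ s := Ne.symm hsv
    have hvt : v ≠ t := Ne.symm htv
    have hst : s ≠ t := Ne.symm hts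
    have hus : u ≠ s := Ne.symm hsu
    have hut : u ≠ t := Ne.symm htu
    have hcard4 : ({u, v, s, t} : Finset V).card = 4 := by
      rw [Finset.card_insert_of_notMem (by simp [huv_ne, hus, hut]),
        Finset.card_insert_of_notMem (by simp [hvs, hvt]),
        Finset.card_insert_of_notMem (by simp [hst]), Finset.card_singleton]
    have hNw : G.neighborFinset w = {u, v, s, t} := by
      refine (Finset.eq_of_subset_of_card_le ?_ ?_).symm
      · intro z hz
        simp only [Finset.mem_insert, Finset.mem_singleton] at hz
        rw [mem_neighborFinset]
        rcases hz with rfl | rfl | rfl | rfl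
        · exact G.adj_symm huw
        · exact G.adj_symm hAvw
        · exact hws
        · exact hwt
      · rw [hcard4, card_neighborFinset_eq_degree]; exact hΔ w
    have hdegw : G.degree w = 4 := by
      rw [← card_neighborFinset_eq_degree, hNw, hcard4]
    -- N(t) = {u, v, w, s}
    have hcard4t : ({u, v, w, s} : Finset V).card = 4 := by
      rw [Finset.card_insert_of_notMem (by simp [huv_ne, Ne.symm hwu, hus]),
        Finset.card_insert_of_notMem (by simp [Ne.symm hwv, hvs]),
        Finset.card_insert_of_notMem (by simp [Ne.symm hsw]), Finset.card_singleton]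
    have hNt : G.neighborFinset t = {u, v, w, s} := by
      refine (Finset.eq_of_subset_of_card_le ?_ ?_).symm
      · intro z hz
        simp only [Finset.mem_insert, Finset.mem_singleton] at hz
        rw [mem_neighborFinset]
        rcases hz with rfl | rfl | rfl | rfl
        · exact hAtu
        · exact hAtv
        · exact G.adj_symm hwt
        · exact hAts
      · rw [hcard4t, card_neighborFinset_eq_degree]; exact hΔ t
    -- degree u = 4, get fourth neighbor p
    have hdegu : G.degree u = 4 := by
      have h1 := hmaxdeg w
      have h2 := hΔ u
      omega
    have hsubu : ({v, w, t} : Finset V) ⊆ G.neighborFinset u := by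
      intro z hz
      simp only [Finset.mem_insert, Finset.mem_singleton] at hz
      rw [mem_neighborFinset]
      rcases hz with rfl | rfl | rfl
      · exact huv
      · exact huw
      · exact G.adj_symm hAtu
    have hcard3 : ({v, w, t} : Finset V).card = 3 := by
      rw [Finset.card_insert_of_notMem (by simp [Ne.symm hwv, hvt]),
        Finset.card_insert_of_notMem (by simp [Ne.symm htw]), Finset.card_singleton]
    have hssub : ({v, w, t} : Finset V) ⊂ G.neighborFinset u := by
      rw [Finset.ssubset_iff_subset_ne]
      refine ⟨hsubu, fun h => ?_⟩
      have := hdegu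
      rw [← card_neighborFinset_eq_degree, ← h, hcard3] at this
      omega
    obtain ⟨p, hpN, hpne⟩ := Finset.exists_of_ssubset hssub
    simp only [Finset.mem_insert, Finset.mem_singleton, not_or] at hpne
    obtain ⟨hpv, hpw, hpt⟩ := hpne
    rw [mem_neighborFinset] at hpN
    have hpu : p ≠ u := (G.ne_of_adj hpN).symm
    have hps : p ≠ s := by
      rintro rfl
      exact hnus hpN
    -- N(u) = {v, w, t, p}
    have hcard4u : ({v, w, t, p} : Finset V).card = 4 := by
      rw [Finset.card_insert_of_notMem (by simp [Ne.symm hwv, hvt, Ne.symm hpv]),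
        Finset.card_insert_of_notMem (by simp [Ne.symm htw, Ne.symm hpw]),
        Finset.card_insert_of_notMem (by simp [Ne.symm hpt]), Finset.card_singleton]
    have hNu : G.neighborFinset u = {v, w, t, p} := by
      refine (Finset.eq_of_subset_of_card_le ?_ ?_).symm
      · intro z hz
        simp only [Finset.mem_insert, Finset.mem_singleton] at hz
        rw [mem_neighborFinset]
        rcases hz with rfl | rfl | rfl | rfl
        · exact huv
        · exact huw
        · exact G.adj_symm hAtu
        · exact hpN
      · rw [hcard4u, card_neighborFinset_eq_degree, hdegu]
    -- N(v) = {u, w, t, p}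
    have hNvexp : G.neighborFinset v = {u, w, t, p} := by
      rw [hNv, hF, hNu]
      have : ({v, w, t, p} : Finset V).erase v = {w, t, p} := by
        apply Finset.erase_insert
        simp [Ne.symm hwv, hvt, Ne.symm hpv]
      rw [this]
    have hAvp : G.Adj v p := by
      rw [← mem_neighborFinset, hNvexp]; simp
    -- non-adjacencies of p
    have hnpw : ¬ G.Adj p w := by
      intro h
      have : p ∈ G.neighborFinset w := by rw [mem_neighborFinset]; exact G.adj_symm h
      rw [hNw] at this
      simp only [Finset.mem_insert, Finset.mem_singleton] at this
      rcases this with rfl | rfl | rfl | rfl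
      · exact hpu rfl
      · exact hpv rfl
      · exact hps rfl
      · exact hpt rfl
    have hnpt : ¬ G.Adj p t := by
      intro h
      have : p ∈ G.neighborFinset t := by rw [mem_neighborFinset]; exact G.adj_symm h
      rw [hNt] at this
      simp only [Finset.mem_insert, Finset.mem_singleton] at this
      rcases this with rfl | rfl | rfl | rfl
      · exact hpu rfl
      · exact hpv rfl
      · exact hpw rfl
      · exact hps rfl
    -- N(p) ⊆ {u, v}
    have hNp : ∀ z, G.Adj p z → z = u ∨ z = v := by
      obtain ⟨r, hpr, hrmax⟩ := hc p
      have hr_cases : r = u ∨ r = v := by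
        by_contra hr
        push_neg at hr
        have hAru : G.Adj r u := hrmax u (G.adj_symm hpN) (Ne.symm hr.1)
        have : r ∈ G.neighborFinset u := by rw [mem_neighborFinset]; exact G.adj_symm hAru
        rw [hNu] at this
        simp only [Finset.mem_insert, Finset.mem_singleton] at this
        rcases this with rfl | rfl | rfl | rfl
        · exact hr.2 rfl
        · exact hnpw hpr
        · exact hnpt hpr
        · exact G.irrefl hpr
      intro z hpz
      rcases hr_cases with hr | hr
      · -- r = u
        by_cases hzu : z = u
        · exact Or.inl hzu
        · have h2 := hrmax z hpz (fun h => hzu (h.trans hr))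
          rw [hr] at h2
          have : z ∈ G.neighborFinset u := by rw [mem_neighborFinset]; exact h2
          rw [hNu] at this
          simp only [Finset.mem_insert, Finset.mem_singleton] at this
          rcases this with rfl | rfl | rfl | rfl
          · exact Or.inr rfl
          · exact absurd hpz hnpw
          · exact absurd hpz hnpt
          · exact absurd hpz (G.irrefl)
      · -- r = v
        by_cases hzv : z = v
        · exact Or.inr hzv
        · have h2 := hrmax z hpz (fun h => hzv (h.trans hr))
          rw [hr] at h2
          have : z ∈ G.neighborFinset v := by rw [mem_neighborFinset]; exact h2
          rw [hNvexp] at this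
          simp only [Finset.mem_insert, Finset.mem_singleton] at this
          rcases this with rfl | rfl | rfl | rfl
          · exact Or.inl rfl
          · exact absurd hpz hnpw
          · exact absurd hpz hnpt
          · exact absurd hpz (G.irrefl)
    -- N(s) ⊆ {w, t}
    have hNs : ∀ z, G.Adj s z → z = w ∨ z = t := by
      obtain ⟨r, hsr, hrmax⟩ := hc s
      have hr_cases : r = w ∨ r = t := by
        by_contra hr
        push_neg at hr
        have hArw : G.Adj r w := hrmax w (G.adj_symm hws) (Ne.symm hr.1)
        have : r ∈ G.neighborFinset w := by rw [mem_neighborFinset]; exact G.adj_symm hArw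
        rw [hNw] at this
        simp only [Finset.mem_insert, Finset.mem_singleton] at this
        rcases this with rfl | rfl | rfl | rfl
        · exact hnus (G.adj_symm hsr)
        · exact hnvs (G.adj_symm hsr)
        · exact G.irrefl hsr
        · exact hr.2 rfl
      intro z hsz
      rcases hr_cases with hr | hr
      · by_cases hzw : z = w
        · exact Or.inl hzw
        · have h2 := hrmax z hsz (fun h => hzw (h.trans hr))
          rw [hr] at h2
          have : z ∈ G.neighborFinset w := by rw [mem_neighborFinset]; exact h2
          rw [hNw] at this
          simp only [Finset.mem_insert, Finset.mem_singleton] at this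
          rcases this with rfl | rfl | rfl | rfl
          · exact absurd (G.adj_symm hsz) hnus
          · exact absurd (G.adj_symm hsz) hnvs
          · exact absurd hsz (G.irrefl)
          · exact Or.inr rfl
      · by_cases hzt : z = t
        · exact Or.inr hzt
        · have h2 := hrmax z hsz (fun h => hzt (h.trans hr))
          rw [hr] at h2
          have : z ∈ G.neighborFinset t := by rw [mem_neighborFinset]; exact h2
          rw [hNt] at this
          simp only [Finset.mem_insert, Finset.mem_singleton] at this
          rcases this with rfl | rfl | rfl | rfl
          · exact absurd (G.adj_symm hsz) hnus
          · exact absurd (G.adj_symm hsz) hnvs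
          · exact Or.inl rfl
          · exact absurd hsz (G.irrefl)
    -- the closed set A = {u, v, w, s, t, p}
    set A : Finset V := {u, v, w, s, t, p} with hA
    have hclosed : ∀ x ∈ A, ∀ y, G.Adj x y → y ∈ A := by
      intro x hx y hxy
      rw [hA] at hx ⊢
      simp only [Finset.mem_insert, Finset.mem_singleton] at hx ⊢
      rcases hx with hx | hx | hx | hx | hx | hx <;> rw [hx] at hxy
      · -- x = u
        have : y ∈ G.neighborFinset u := by rw [mem_neighborFinset]; exact hxy
        rw [hNu] at this
        simp only [Finset.mem_insert, Finset.mem_singleton] at this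
        rcases this with h | h | h | h <;> simp [h]
      · have : y ∈ G.neighborFinset v := by rw [mem_neighborFinset]; exact hxy
        rw [hNvexp] at this
        simp only [Finset.mem_insert, Finset.mem_singleton] at this
        rcases this with h | h | h | h <;> simp [h]
      · have : y ∈ G.neighborFinset w := by rw [mem_neighborFinset]; exact hxy
        rw [hNw] at this
        simp only [Finset.mem_insert, Finset.mem_singleton] at this
        rcases this with h | h | h | h <;> simp [h]
      · rcases hNs y hxy with h | h <;> simp [h]
      · have : y ∈ G.neighborFinset t := by rw [mem_neighborFinset]; exact hxy
        rw [hNt] at this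
        simp only [Finset.mem_insert, Finset.mem_singleton] at this
        rcases this with h | h | h | h <;> simp [h]
      · rcases hNp y hxy with h | h <;> simp [h]
    have hcardA : A.card ≤ 6 := by
      rw [hA]
      refine le_trans (Finset.card_insert_le _ _) ?_
      refine Nat.succ_le_succ ?_
      refine le_trans (Finset.card_insert_le _ _) ?_
      refine Nat.succ_le_succ ?_
      refine le_trans (Finset.card_insert_le _ _) ?_
      refine Nat.succ_le_succ ?_
      refine le_trans (Finset.card_insert_le _ _) ?_
      refine Nat.succ_le_succ ?_
      refine le_trans (Finset.card_insert_le _ _) ?_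
      simp
    have := closure_lemma G hG A u (by simp [hA]) hclosed
    omega

end MdimAux

/-- A connected chemical graph (maximum degree at most 4) on at least 7
vertices satisfies `mdim G ≤ n - 1`. -/
theorem stmt_3 [Fintype V] (G : SimpleGraph V) [DecidableRel G.Adj]
    (hG : G.Connected) (hΔ : ∀ v : V, G.degree v ≤ 4)
    (hn : 7 ≤ Fintype.card V) :
    mdim G ≤ Fintype.card V - 1 := by
  classical
  obtain ⟨u, hu⟩ := MdimAux.exists_no_max_neighbor G hG hΔ hn
  have hres := MdimAux.resolving_of_no_max_neighbor G hG u hu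
  have hmem : Fintype.card V - 1 ∈
      {n | ∃ W : Finset V, W.card = n ∧ IsMixedResolving G ↑W} :=
    ⟨Finset.univ.erase u, by
      rw [Finset.card_erase_of_mem (Finset.mem_univ u), Finset.card_univ], hres⟩
  exact Nat.sInf_le hmem
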